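/- In a weakly reversible chemical reaction network, if W ⊆ S is a semilocking set and for some reaction y → y' we have W ∩ supp(y) ≠ ∅, then for every reaction z → z' in the same connected component of the reaction graph, W ∩ supp(z) ≠ ∅. -/
import Mathlib


/-- In a weakly reversible network, if a semilocking set `W` touches the source of
one reaction, then `W` touches the source of every reaction in the same connected
component of the reaction graph. -/
theorem semilocking_locks_linkage_class {n : ℕ}
    (R : Set ((Fin n → ℕ) × (Fin n → ℕ)))
    (W : Set (Fin n)) (hWne : W.Nonempty)
    (hWR : ∀ p ∈ R, Relation.ReflTransGen (fun a b => (a, b) ∈ R) p.2 p.1)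
    (hsemi : ∀ p ∈ R, (∃ j ∈ W, p.2 j ≠ 0) → ∃ j ∈ W, p.1 j ≠ 0)
    (y y' z z' : Fin n → ℕ) (hyy' : (y, y') ∈ R) (hzz' : (z, z') ∈ R)
    (hconn : Relation.ReflTransGen (fun a b => (a, b) ∈ R ∨ (b, a) ∈ R) y z)
    (hy : ∃ j ∈ W, y j ≠ 0) :
    ∃ j ∈ W, z j ≠ 0 := by
  -- good c : W touches c; semilocking pulls "good" backward along directed paths
  have back : ∀ a b : Fin n → ℕ,
      Relation.ReflTransGen (fun a b => (a, b) ∈ R) a b →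
      (∃ j ∈ W, b j ≠ 0) → ∃ j ∈ W, a j ≠ 0 := by
    intro a b h
    induction h with
    | refl => exact fun h => h
    | tail _ hbc ih => exact fun hc => ih (hsemi _ hbc hc)
  -- good is preserved forward along a directed edge, via weak reversibility
  have fwd : ∀ a b : Fin n → ℕ, (a, b) ∈ R →
      (∃ j ∈ W, a j ≠ 0) → ∃ j ∈ W, b j ≠ 0 :=
    fun a b hab ha => back b a (hWR (a, b) hab) ha
  -- hence good is preserved along undirected connectivity
  have main : ∀ c : Fin n → ℕ,
      Relation.ReflTransGen (fun a b => (a, b) ∈ R ∨ (b, a) ∈ R) y c →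
      ∃ j ∈ W, c j ≠ 0 := by
    intro c h
    induction h with
    | refl => exact hy
    | tail _ hbc ih =>
      rcases hbc with h | h
      · exact fwd _ _ h ih
      · exact hsemi _ h ih
  exact main z hconn
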